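/- With ν = ξ(ξ-ξ₁)ξ₁(5(ξ² - ξξ₁ + ξ₁²) + 3α) and α > 0, the two real numbers ν and (ξ₁η - ξη₁)²/(ξ(ξ-ξ₁)ξ₁) have the same sign (their product is nonnegative), and consequently 0 ≤ |ν| ≤ |p(ζ₁) + p(ζ-ζ₁) - p(ζ)| where p(ξ,η) = ξ⁵ + αξ³ - η²/ξ. -/

import Mathlib

/-- With `ν = ξ(ξ-ξ₁)ξ₁(5(ξ² - ξξ₁ + ξ₁²) + 3α)` and `α > 0`, the numbers `ν` and
`(ξ₁η - ξη₁)²/(ξ(ξ-ξ₁)ξ₁)` have the same sign (their product is nonnegative), and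
consequently `0 ≤ |ν| ≤ |p(ζ₁) + p(ζ-ζ₁) - p(ζ)|` where `p(ξ,η) = ξ⁵ + αξ³ - η²/ξ`. -/
theorem stmt_2 (α : ℝ) (hα : 0 < α) (ξ ξ₁ η η₁ : ℝ)
    (hξ : ξ ≠ 0) (hξ₁ : ξ₁ ≠ 0) (hξξ₁ : ξ - ξ₁ ≠ 0) :
    0 ≤ (ξ * (ξ - ξ₁) * ξ₁ * (5 * (ξ^2 - ξ * ξ₁ + ξ₁^2) + 3 * α))
        * ((ξ₁ * η - ξ * η₁)^2 / (ξ * (ξ - ξ₁) * ξ₁)) ∧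
    0 ≤ |ξ * (ξ - ξ₁) * ξ₁ * (5 * (ξ^2 - ξ * ξ₁ + ξ₁^2) + 3 * α)| ∧
    |ξ * (ξ - ξ₁) * ξ₁ * (5 * (ξ^2 - ξ * ξ₁ + ξ₁^2) + 3 * α)| ≤
      |(ξ₁^5 + α * ξ₁^3 - η₁^2 / ξ₁)
        + ((ξ - ξ₁)^5 + α * (ξ - ξ₁)^3 - (η - η₁)^2 / (ξ - ξ₁))
        - (ξ^5 + α * ξ^3 - η^2 / ξ)| := by
  set ν : ℝ := ξ * (ξ - ξ₁) * ξ₁ * (5 * (ξ^2 - ξ * ξ₁ + ξ₁^2) + 3 * α) with hν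
  set μ : ℝ := (ξ₁ * η - ξ * η₁)^2 / (ξ * (ξ - ξ₁) * ξ₁) with hμ
  have hK : 0 < 5 * (ξ^2 - ξ * ξ₁ + ξ₁^2) + 3 * α := by nlinarith [sq_nonneg (ξ - ξ₁), sq_nonneg ξ, sq_nonneg ξ₁]
  have h1 : 0 ≤ ν * μ := by
    have : ν * μ = (5 * (ξ^2 - ξ * ξ₁ + ξ₁^2) + 3 * α) * (ξ₁ * η - ξ * η₁)^2 := by
      rw [hν, hμ]; field_simp
    rw [this]
    positivity
  have heq : (ξ₁^5 + α * ξ₁^3 - η₁^2 / ξ₁)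
        + ((ξ - ξ₁)^5 + α * (ξ - ξ₁)^3 - (η - η₁)^2 / (ξ - ξ₁))
        - (ξ^5 + α * ξ^3 - η^2 / ξ) = -(ν + μ) := by
    rw [hν, hμ]; field_simp; ring
  refine ⟨h1, abs_nonneg _, ?_⟩
  rw [heq, abs_neg]
  nlinarith [abs_nonneg ν, abs_nonneg (ν + μ), sq_abs ν, sq_abs (ν + μ), sq_nonneg μ, sq_nonneg (|ν| + |ν + μ|)]
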